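/- Let k be a field, B = k[X,Y] the polynomial ring in two variables, I = (X², Y−1) an ideal of B, and A = k + I the subring. Let F = X²T² − Y ∈ A[T]. Then A[T]/(F·A[T]) is isomorphic to a polynomial ring in two variables over k, although A is not normal. -/

import Mathlib

set_option maxHeartbeats 1000000
set_option synthInstance.maxHeartbeats 1000000

open MvPolynomial

noncomputable section StmtTwelve

variable (k : Type*) [Field k]

/-- The ideal `I = (X², Y-1)` of `B = k[X,Y]`. -/
def Istmt : Ideal (MvPolynomial (Fin 2) k) := Ideal.span {X 0 ^ 2, X 1 - 1}

/-- The subring `A = k + I` of `B = k[X,Y]`, realized as the `k`-subalgebra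
generated by the ideal `I` (since `I` is an ideal, this is exactly `k + I`). -/
def Asub : Subalgebra k (MvPolynomial (Fin 2) k) :=
  Algebra.adjoin k (Istmt k : Set (MvPolynomial (Fin 2) k))

/-- The ring `A = k + I` as a type. -/
def Astmt : Type _ := ↥(Asub k)

instance : CommRing (Astmt k) := inferInstanceAs (CommRing ↥(Asub k))
instance : Algebra k (Astmt k) := inferInstanceAs (Algebra k ↥(Asub k))

lemma X0sq_mem : (X 0 ^ 2 : MvPolynomial (Fin 2) k) ∈ Asub k :=
  Algebra.subset_adjoin (Ideal.subset_span (Set.mem_insert _ _))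

lemma X1_mem : (X 1 : MvPolynomial (Fin 2) k) ∈ Asub k := by
  have h : (X 1 - 1 : MvPolynomial (Fin 2) k) ∈ Asub k :=
    Algebra.subset_adjoin (Ideal.subset_span (Set.mem_insert_of_mem _ rfl))
  simpa using add_mem h (one_mem (Asub k))

/-- `F = X²T² - Y ∈ A[T]`. -/
def Fstmt : Polynomial (Astmt k) :=
  Polynomial.C (⟨X 0 ^ 2, X0sq_mem k⟩ : Asub k) * Polynomial.X ^ 2 -
    Polynomial.C (⟨X 1, X1_mem k⟩ : Asub k)

instance : IsDomain (Astmt k) := inferInstanceAs (IsDomain ↥(Asub k))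

/-- package an element of `B` with a membership proof into `A` -/
def toA (v : MvPolynomial (Fin 2) k) (h : v ∈ Asub k) : Astmt k := ⟨v, h⟩

lemma memA {b : MvPolynomial (Fin 2) k} (h : b ∈ Istmt k) : b ∈ Asub k :=
  Algebra.subset_adjoin h

lemma X0sq_memI : (X 0 ^ 2 : MvPolynomial (Fin 2) k) ∈ Istmt k :=
  Ideal.subset_span (Set.mem_insert _ _)

lemma X1sub1_memI : (X 1 - 1 : MvPolynomial (Fin 2) k) ∈ Istmt k :=
  Ideal.subset_span (Set.mem_insert_of_mem _ rfl)

lemma X0cube_memI : (X 0 ^ 3 : MvPolynomial (Fin 2) k) ∈ Istmt k := by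
  have h : (X 0 ^ 3 : MvPolynomial (Fin 2) k) = X 0 * X 0 ^ 2 := by ring
  rw [h]; exact Ideal.mul_mem_left _ _ (X0sq_memI k)

lemma XYm_memI : (X 0 * (X 1 - 1) : MvPolynomial (Fin 2) k) ∈ Istmt k :=
  Ideal.mul_mem_left _ _ (X1sub1_memI k)

/-- the inclusion `A → B` as a ring hom -/
def inc : Astmt k →+* MvPolynomial (Fin 2) k := ((Asub k).val : _ →ₐ[k] _).toRingHom

@[simp] lemma inc_toA (v : MvPolynomial (Fin 2) k) (h : v ∈ Asub k) :
    inc k (toA k v h) = v := rfl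

lemma Fstmt_eq : Fstmt k =
    Polynomial.C (toA k (X 0 ^ 2) (X0sq_mem k)) * Polynomial.X ^ 2 -
      Polynomial.C (toA k (X 1) (X1_mem k)) := rfl

/-- the element `q ∈ A[T]` that maps to `X` -/
def qel : Polynomial (Astmt k) :=
  Polynomial.C (toA k (X 0 ^ 3) (memA k (X0cube_memI k))) * Polynomial.X ^ 2 -
    Polynomial.C (toA k (X 0 * (X 1 - 1)) (memA k (XYm_memI k)))

/-- key tool: prove equalities mod `F` by computation in `B[T]` -/
lemma mk_eq_of (a b w : Polynomial (Astmt k))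
    (h : a.map (inc k) = b.map (inc k) + (w.map (inc k)) * ((Fstmt k).map (inc k))) :
    Ideal.Quotient.mk (Ideal.span {Fstmt k}) a = Ideal.Quotient.mk (Ideal.span {Fstmt k}) b := by
  have hinj : Function.Injective (inc k) := Subtype.val_injective
  have hab : a = b + w * Fstmt k := by
    apply Polynomial.map_injective _ hinj
    rw [Polynomial.map_add, Polynomial.map_mul, h]
  have hz : Ideal.Quotient.mk (Ideal.span {Fstmt k}) (w * Fstmt k) = 0 :=
    Ideal.Quotient.eq_zero_iff_mem.mpr (Ideal.mul_mem_left _ _ (Ideal.subset_span rfl))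
  rw [hab, map_add, hz, add_zero]

/-- `Φ : A[T] → B`, `T ↦ Y(=X 1)`, `a ↦ a(X, X²Y²)` -/
def gmap : Astmt k →ₐ[k] MvPolynomial (Fin 2) k :=
  (MvPolynomial.aeval ![X 0, X 0 ^ 2 * X 1 ^ 2]).comp ((Asub k).val)

def Φ : Polynomial (Astmt k) →ₐ[k] MvPolynomial (Fin 2) k :=
  Polynomial.aevalTower (gmap k) (X 1)

lemma Φ_C (a : Astmt k) :
    Φ k (Polynomial.C a) = MvPolynomial.aeval ![X 0, X 0 ^ 2 * X 1 ^ 2] a.1 := by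
  simp only [Φ, Polynomial.aevalTower_C, gmap, AlgHom.comp_apply]
  rfl

lemma Φ_X : Φ k Polynomial.X = X 1 := Polynomial.aevalTower_X _ _

lemma Φ_F : Φ k (Fstmt k) = 0 := by
  rw [Fstmt_eq, map_sub, map_mul, map_pow, Φ_C, Φ_C, Φ_X]
  show (MvPolynomial.aeval ![X 0, X 0 ^ 2 * X 1 ^ 2]) (X 0 ^ 2) * X 1 ^ 2 -
      (MvPolynomial.aeval ![X 0, X 0 ^ 2 * X 1 ^ 2]) (X 1) = 0
  simp


set_option maxHeartbeats 1000000 in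
def Φbar : (Polynomial (Astmt k) ⧸ Ideal.span {Fstmt k}) →ₐ[k] MvPolynomial (Fin 2) k :=
  Ideal.Quotient.liftₐ _ (Φ k) (by
    intro a ha
    rw [Ideal.mem_span_singleton] at ha
    obtain ⟨c, rfl⟩ := ha
    rw [map_mul, Φ_F, zero_mul])

def mkq : Polynomial (Astmt k) →ₐ[k] (Polynomial (Astmt k) ⧸ Ideal.span {Fstmt k}) :=
  Ideal.Quotient.mkₐ k _

def Ψ : MvPolynomial (Fin 2) k →ₐ[k] (Polynomial (Astmt k) ⧸ Ideal.span {Fstmt k}) :=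
  MvPolynomial.aeval ![mkq k (qel k), mkq k Polynomial.X]

def τ : MvPolynomial (Fin 2) k →ₐ[k] (Polynomial (Astmt k) ⧸ Ideal.span {Fstmt k}) :=
  MvPolynomial.aeval ![mkq k (qel k), (mkq k (qel k)) ^ 2 * (mkq k Polynomial.X) ^ 2]

lemma τ_X0 : τ k (X 0) = mkq k (qel k) := by simp [τ]
lemma τ_X1 : τ k (X 1) = (mkq k (qel k)) ^ 2 * (mkq k Polynomial.X) ^ 2 := by simp [τ]

lemma mkq_eq (a : Polynomial (Astmt k)) :
    mkq k a = Ideal.Quotient.mk (Ideal.span {Fstmt k}) a := rfl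

-- multiplication rule for X 0
lemma LX0 (x : MvPolynomial (Fin 2) k) (hx : x ∈ Istmt k) :
    mkq k (qel k) * mkq k (Polynomial.C (toA k x (memA k hx))) =
      mkq k (Polynomial.C (toA k (X 0 * x) (memA k (Ideal.mul_mem_left _ _ hx)))) := by
  rw [mkq_eq, mkq_eq, mkq_eq, ← map_mul]
  apply mk_eq_of k _ _ (Polynomial.C (toA k (X 0 * x) (memA k (Ideal.mul_mem_left _ _ hx))))
  simp only [qel, Fstmt_eq, Polynomial.map_mul, Polynomial.map_sub, Polynomial.map_pow,
    Polynomial.map_C, Polynomial.map_X, inc_toA]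
  simp only [map_mul, map_sub, map_pow, map_one]
  ring

-- multiplication rule for X 1
lemma LX1 (x : MvPolynomial (Fin 2) k) (hx : x ∈ Istmt k) :
    ((mkq k (qel k)) ^ 2 * (mkq k Polynomial.X) ^ 2) * mkq k (Polynomial.C (toA k x (memA k hx))) =
      mkq k (Polynomial.C (toA k (X 1 * x) (memA k (Ideal.mul_mem_left _ _ hx)))) := by
  rw [mkq_eq, mkq_eq, mkq_eq, ← map_pow, ← map_pow, ← map_mul, ← map_mul]
  apply mk_eq_of k _ _
    ((Polynomial.C (toA k (X 0 ^ 2) (X0sq_mem k)) * Polynomial.X ^ 2 * Fstmt k +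
      2 * Polynomial.C (toA k (X 0 ^ 2) (X0sq_mem k)) * Polynomial.X ^ 2 + 1) *
      Polynomial.C (toA k x (memA k hx)))
  simp only [qel, Fstmt_eq, Polynomial.map_mul, Polynomial.map_add, Polynomial.map_sub,
    Polynomial.map_pow, Polynomial.map_one, Polynomial.map_ofNat, Polynomial.map_X,
    Polynomial.map_C, inc_toA]
  simp only [map_mul, map_sub, map_pow, map_one]
  ring

lemma Lmul (b x : MvPolynomial (Fin 2) k) (hx : x ∈ Istmt k) :
    τ k b * mkq k (Polynomial.C (toA k x (memA k hx))) =
      mkq k (Polynomial.C (toA k (b * x) (memA k (Ideal.mul_mem_left _ _ hx)))) := by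
  induction b using MvPolynomial.induction_on generalizing x with
  | C a =>
      have h1 : τ k (MvPolynomial.C a) = algebraMap k _ a := by simp [τ]
      have h2 : (toA k (MvPolynomial.C a * x) (memA k (Ideal.mul_mem_left _ _ hx))) =
          algebraMap k (Astmt k) a * toA k x (memA k hx) := by
        apply Subtype.ext
        rfl
      have h3 : Polynomial.C (algebraMap k (Astmt k) a) =
          algebraMap k (Polynomial (Astmt k)) a := rfl
      rw [h1, h2, Polynomial.C_mul, h3, map_mul, AlgHom.commutes]
  | add p q ihp ihq =>
      rw [map_add, add_mul, ihp x hx, ihq x hx, ← map_add, ← map_add]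
      congr 1
      exact congrArg Polynomial.C (Subtype.ext (by show (p * x) + (q * x) = (p + q) * x; ring))
  | mul_X p n ihp =>
      rw [map_mul, mul_assoc]
      have hXn : τ k (X n) * mkq k (Polynomial.C (toA k x (memA k hx))) =
          mkq k (Polynomial.C (toA k (X n * x) (memA k (Ideal.mul_mem_left _ _ hx)))) := by
        fin_cases n
        · show τ k (X 0) * mkq k (Polynomial.C (toA k x (memA k hx))) =
            mkq k (Polynomial.C (toA k (X 0 * x) (memA k (Ideal.mul_mem_left _ _ hx))))
          rw [τ_X0]; exact LX0 k x hx
        · show τ k (X 1) * mkq k (Polynomial.C (toA k x (memA k hx))) =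
            mkq k (Polynomial.C (toA k (X 1 * x) (memA k (Ideal.mul_mem_left _ _ hx))))
          rw [τ_X1]; exact LX1 k x hx
      rw [hXn, ihp (X n * x) (Ideal.mul_mem_left _ _ hx)]
      exact congrArg (mkq k) (congrArg Polynomial.C (Subtype.ext
        (by show p * (X n * x) = p * X n * x; ring)))

lemma LI (x : MvPolynomial (Fin 2) k) (hx : x ∈ Istmt k) :
    τ k x = mkq k (Polynomial.C (toA k x (memA k hx))) := by
  induction hx using Submodule.span_induction with
  | mem y hy =>
      rcases hy with rfl | rfl
      · rw [map_pow, τ_X0, mkq_eq, ← map_pow]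
        apply mk_eq_of k _ _ (Polynomial.C (toA k (X 0 ^ 2) (X0sq_mem k)) * Fstmt k +
          2 * Polynomial.C (toA k (X 0 ^ 2) (X0sq_mem k)))
        simp only [qel, Fstmt_eq, Polynomial.map_mul, Polynomial.map_add, Polynomial.map_sub,
          Polynomial.map_pow, Polynomial.map_one, Polynomial.map_ofNat, Polynomial.map_X,
          Polynomial.map_C, inc_toA]
        simp only [map_mul, map_sub, map_pow, map_one]
        ring
      · rw [map_sub, map_one, τ_X1]
        rw [show (mkq k (qel k)) ^ 2 * (mkq k Polynomial.X) ^ 2 - 1 =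
          mkq k (qel k ^ 2 * Polynomial.X ^ 2 - 1) by
            rw [map_sub, map_mul, map_pow, map_pow, map_one], mkq_eq, mkq_eq]
        apply mk_eq_of k _ _ (Polynomial.C (toA k (X 0 ^ 2) (X0sq_mem k)) * Polynomial.X ^ 2 *
          Fstmt k + 2 * Polynomial.C (toA k (X 0 ^ 2) (X0sq_mem k)) * Polynomial.X ^ 2 + 1)
        simp only [qel, Fstmt_eq, Polynomial.map_mul, Polynomial.map_add, Polynomial.map_sub,
          Polynomial.map_pow, Polynomial.map_one, Polynomial.map_ofNat, Polynomial.map_X,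
          Polynomial.map_C, inc_toA]
        simp only [map_mul, map_sub, map_pow, map_one]
        ring
  | zero =>
      have h0 : toA k 0 (memA k (Submodule.zero_mem _)) = 0 := Subtype.ext rfl
      rw [map_zero, h0, map_zero, map_zero]
  | add x y hx hy ihx ihy =>
      rw [map_add, ihx, ihy, ← map_add, ← map_add]
      exact congrArg (mkq k) (congrArg Polynomial.C (Subtype.ext rfl))
  | smul b y hy ihy =>
      show τ k (b * y) = mkq k (Polynomial.C (toA k (b * y) (memA k (Ideal.mul_mem_left _ b hy))))
      rw [map_mul, ihy, Lmul k b y hy]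

lemma LA (x : MvPolynomial (Fin 2) k) (hx : x ∈ Asub k) :
    τ k x = mkq k (Polynomial.C (toA k x hx)) := by
  induction hx using Algebra.adjoin_induction with
  | mem y hy => exact LI k y hy
  | algebraMap r =>
      have h0 : toA k (algebraMap k (MvPolynomial (Fin 2) k) r) (Subalgebra.algebraMap_mem _ r) =
          algebraMap k (Astmt k) r := Subtype.ext rfl
      rw [AlgHom.commutes, h0]
      have h1 : Polynomial.C (algebraMap k (Astmt k) r) =
          algebraMap k (Polynomial (Astmt k)) r := rfl
      rw [h1, AlgHom.commutes]
  | add x y hx hy ihx ihy =>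
      rw [map_add, ihx, ihy, ← map_add, ← map_add]
      exact congrArg (mkq k) (congrArg Polynomial.C (Subtype.ext rfl))
  | mul x y hx hy ihx ihy =>
      rw [map_mul, ihx, ihy, ← map_mul, ← map_mul]
      exact congrArg (mkq k) (congrArg Polynomial.C (Subtype.ext rfl))

lemma Φbar_mk (a : Polynomial (Astmt k)) : Φbar k (mkq k a) = Φ k a := rfl

lemma comp1 : (Φbar k).comp (Ψ k) = AlgHom.id k (MvPolynomial (Fin 2) k) := by
  apply MvPolynomial.algHom_ext
  intro i
  fin_cases i
  · show Φbar k (Ψ k (X 0)) = X 0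
    have h1 : Ψ k (X 0) = mkq k (qel k) := by simp [Ψ]
    rw [h1, Φbar_mk, qel, map_sub, map_mul, map_pow, Φ_C, Φ_C, Φ_X]
    show (MvPolynomial.aeval ![X 0, X 0 ^ 2 * X 1 ^ 2]) (X 0 ^ 3) * X 1 ^ 2 -
        (MvPolynomial.aeval ![X 0, X 0 ^ 2 * X 1 ^ 2]) (X 0 * (X 1 - 1)) = X 0
    simp
    ring
  · show Φbar k (Ψ k (X 1)) = X 1
    have h1 : Ψ k (X 1) = mkq k Polynomial.X := by simp [Ψ]
    rw [h1, Φbar_mk, Φ_X]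

lemma Ψ_aeval : (Ψ k).comp (MvPolynomial.aeval ![X 0, X 0 ^ 2 * X 1 ^ 2]) = τ k := by
  apply MvPolynomial.algHom_ext
  intro i
  fin_cases i
  · show Ψ k ((MvPolynomial.aeval ![X 0, X 0 ^ 2 * X 1 ^ 2]) (X 0)) = τ k (X 0)
    rw [τ_X0]
    simp [Ψ]
  · show Ψ k ((MvPolynomial.aeval ![X 0, X 0 ^ 2 * X 1 ^ 2]) (X 1)) = τ k (X 1)
    rw [τ_X1]
    simp [Ψ]

lemma comp2 : (Ψ k).comp (Φbar k) =
    AlgHom.id k (Polynomial (Astmt k) ⧸ Ideal.span {Fstmt k}) := by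
  apply Ideal.Quotient.algHom_ext
  apply AlgHom.ext
  intro p
  show Ψ k (Φbar k (mkq k p)) = mkq k p
  rw [Φbar_mk]
  induction p using Polynomial.induction_on with
  | C a =>
      rw [Φ_C]
      have h1 : Ψ k ((MvPolynomial.aeval ![X 0, X 0 ^ 2 * X 1 ^ 2]) a.1) = τ k a.1 :=
        congrFun (congrArg DFunLike.coe (Ψ_aeval k)) a.1
      rw [h1, LA k a.1 a.2]
      exact congrArg (mkq k) (congrArg Polynomial.C rfl)
  | add p q ihp ihq => rw [map_add, map_add, ihp, ihq, map_add]
  | monomial n a ih =>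
      rw [pow_succ, ← mul_assoc, map_mul, map_mul, ih, Φ_X]
      have h1 : Ψ k (X 1) = mkq k Polynomial.X := by simp [Ψ]
      rw [h1, ← map_mul]

def theEquiv : (Polynomial (Astmt k) ⧸ Ideal.span {Fstmt k}) ≃ₐ[k] MvPolynomial (Fin 2) k :=
  AlgEquiv.ofAlgHom (Φbar k) (Ψ k) (comp1 k) (comp2 k)


def φtest : MvPolynomial (Fin 2) k →ₐ[k] Polynomial k :=
  MvPolynomial.aeval ![(Polynomial.X : Polynomial k), 1]

-- X ∉ Asub
lemma coeff1_zero {p : MvPolynomial (Fin 2) k} (hp : p ∈ Asub k) :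
    (φtest k p).coeff 1 = 0 := by
  induction hp using Algebra.adjoin_induction with
  | mem x hx =>
      have h2 : φtest k x ∈ Ideal.span {(Polynomial.X : Polynomial k) ^ 2} := by
        have := Ideal.mem_map_of_mem (φtest k : MvPolynomial (Fin 2) k →+* Polynomial k) hx
        rw [Istmt, Ideal.map_span] at this
        refine Ideal.span_le.mpr ?_ this
        rintro y ⟨z, hz, rfl⟩
        rcases hz with rfl | rfl
        · refine Ideal.subset_span ?_
          simp [φtest]
        · simp [φtest]
      rw [Ideal.mem_span_singleton] at h2
      obtain ⟨c, hc⟩ := h2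
      rw [hc, mul_comm, Polynomial.coeff_mul_X_pow']
      simp
  | algebraMap r => simp [φtest]
  | add x y hx hy ihx ihy => rw [map_add, Polynomial.coeff_add, ihx, ihy, add_zero]
  | mul x y hx hy ihx ihy =>
      rw [map_mul, Polynomial.coeff_mul, Finset.Nat.antidiagonal_succ]
      simp [ihx, ihy]

lemma X0_not_mem : (X 0 : MvPolynomial (Fin 2) k) ∉ Asub k := by
  intro h
  have := coeff1_zero k h
  simp [φtest] at this


lemma mem_A_of_mem_I {b : MvPolynomial (Fin 2) k} (h : b ∈ Istmt k) : b ∈ Asub k :=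
  Algebra.subset_adjoin h

lemma X1_mem' : (X 1 : MvPolynomial (Fin 2) k) ∈ Asub k := by
  have h : (X 1 - 1 : MvPolynomial (Fin 2) k) ∈ Asub k :=
    Algebra.subset_adjoin (Ideal.subset_span (Set.mem_insert_of_mem _ rfl))
  simpa using add_mem h (one_mem (Asub k))

lemma not_ic : ¬ IsIntegrallyClosed (Astmt k) := by
  intro h
  set K := FractionRing (Astmt k)
  have hYm : (X 1 - 1 : MvPolynomial (Fin 2) k) ∈ Asub k :=
    Algebra.subset_adjoin (Ideal.subset_span (Set.mem_insert_of_mem _ rfl))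
  have hXYm : (X 0 * (X 1 - 1) : MvPolynomial (Fin 2) k) ∈ Asub k :=
    mem_A_of_mem_I k (Ideal.mul_mem_left _ _ (Ideal.subset_span (Set.mem_insert_of_mem _ rfl)))
  have hX2m : (X 0 ^ 2 : MvPolynomial (Fin 2) k) ∈ Asub k :=
    Algebra.subset_adjoin (Ideal.subset_span (Set.mem_insert _ _))
  set a : Astmt k := ⟨X 0 * (X 1 - 1), hXYm⟩
  set b : Astmt k := ⟨X 1 - 1, hYm⟩
  have hb0 : b ≠ 0 := by
    intro hb
    have : (X 1 - 1 : MvPolynomial (Fin 2) k) = 0 := congrArg Subtype.val hb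
    have h1 := congrArg MvPolynomial.constantCoeff this
    simp at h1
  have hbK : (algebraMap (Astmt k) K) b ≠ 0 := fun hc => hb0 <|
    IsFractionRing.injective (Astmt k) K (show _ = algebraMap _ K 0 by rw [map_zero]; exact hc)
  set x : K := algebraMap (Astmt k) K a / algebraMap (Astmt k) K b
  have hx2 : x ^ 2 = algebraMap (Astmt k) K (toA k (X 0 ^ 2) hX2m) := by
    rw [div_pow, div_eq_iff (pow_ne_zero _ hbK), ← map_pow, ← map_pow, ← map_mul]
    congr 1
    apply Subtype.ext
    show (X 0 * (X 1 - 1) : MvPolynomial (Fin 2) k) ^ 2 = X 0 ^ 2 * (X 1 - 1) ^ 2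
    ring
  have hint : IsIntegral (Astmt k) x := by
    refine ⟨Polynomial.X ^ 2 - Polynomial.C (toA k (X 0 ^ 2) hX2m), ?_, ?_⟩
    · apply Polynomial.monic_X_pow_sub_C _ (by norm_num)
    · simp [Polynomial.eval₂_sub, hx2]
  obtain ⟨y, hy⟩ := IsIntegrallyClosedIn.isIntegral_iff.mp hint
  have : algebraMap (Astmt k) K (y * b) = algebraMap (Astmt k) K a := by
    rw [map_mul, hy]
    show x * _ = _
    rw [div_mul_cancel₀ _ hbK]
  have h2 : y * b = a := IsFractionRing.injective (Astmt k) K this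
  have h3 : y.1 * (X 1 - 1) = X 0 * (X 1 - 1) := congrArg Subtype.val h2
  have h4 : y.1 = (X 0 : MvPolynomial (Fin 2) k) := by
    have hne : (X 1 - 1 : MvPolynomial (Fin 2) k) ≠ 0 := fun hb => by
      have h1 := congrArg MvPolynomial.constantCoeff hb
      simp at h1
    exact mul_right_cancel₀ hne h3
  exact X0_not_mem k (h4 ▸ y.2)

/-- Bhatwadekar's example: `A[T]/(F) ≅ k[X,T]` is a polynomial ring in two
variables over `k`, although `A` is not normal. -/
theorem stmt_12 :
    Nonempty ((Polynomial (Astmt k) ⧸ Ideal.span {Fstmt k}) ≃ₐ[k]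
      MvPolynomial (Fin 2) k) ∧ ¬ IsIntegrallyClosed (Astmt k) := by
  exact ⟨⟨theEquiv k⟩, not_ic k⟩

end StmtTwelve
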